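/- Let Re(s) > 0, n a positive real, and a a real number with a > 1. Then (4/(√π Γ((1+s)/2))) ∫₀^∞ ∫₀^∞ (uv)^s e^{−(u²+v²)} / (n²u² + (a−1)²v²)^{s/2} du dv = (n + a − 1)^{−s}. -/

import Mathlib

open Real MeasureTheory Set

lemma glasser {β : ℝ} (hβ : 0 < β) :
    ∫ x in Ioi (0:ℝ), Real.exp (-(x^2 + β^2/x^2)) = Real.sqrt π / 2 * Real.exp (-(2*β)) := by
  -- change of variables y = x - β/x maps Ioi 0 onto univ
  have himg : (fun x : ℝ => x - β/x) '' (Ioi 0) = univ := by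
    ext y
    simp only [mem_image, mem_Ioi, mem_univ, iff_true]
    set r := Real.sqrt (y^2 + 4*β) with hr
    have hr2 : r^2 = y^2 + 4*β := Real.sq_sqrt (by positivity)
    have hry : -y < r := by
      rcases le_or_gt y 0 with h | h
      · have : |y| < r := by
          rw [← Real.sqrt_sq_eq_abs, hr]
          exact Real.sqrt_lt_sqrt (sq_nonneg y) (by linarith)
        calc -y ≤ |y| := neg_le_abs y
        _ < r := this
      · have : 0 ≤ r := Real.sqrt_nonneg _
        linarith
    refine ⟨(y + r)/2, by linarith, ?_⟩
    have hx : (0:ℝ) < (y + r)/2 := by linarith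
    have h4 : β / ((y+r)/2) = (r - y)/2 := by
      rw [div_eq_iff hx.ne']
      nlinarith [hr2]
    simp only [h4]
    ring
  have hder : ∀ x ∈ Ioi (0:ℝ), HasDerivWithinAt (fun x : ℝ => x - β/x)
      (1 + β/x^2) (Ioi 0) x := by
    intro x hx
    have hx0 : x ≠ 0 := (mem_Ioi.mp hx).ne'
    have h := ((hasDerivAt_id x).sub (((hasDerivAt_inv hx0)).const_mul β))
    have e : (fun x : ℝ => x - β/x) = (id - fun y => β * y⁻¹) := by funext y; simp [div_eq_mul_inv]
    rw [e]; exact (h.congr_deriv (by ring)).hasDerivWithinAt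
  have hinj : InjOn (fun x : ℝ => x - β/x) (Ioi 0) := by
    apply StrictMonoOn.injOn
    intro x hx y hy hxy
    have hx0 : (0:ℝ) < x := hx
    have hy0 : (0:ℝ) < y := hy
    have : β/y < β/x := div_lt_div_of_pos_left hβ hx0 hxy
    simp only
    linarith
  have key := integral_image_eq_integral_abs_deriv_smul measurableSet_Ioi hder hinj
      (fun y => Real.exp (-y^2))
  rw [himg] at key
  have lhs_eq : ∫ y : ℝ in univ, Real.exp (-y^2) = Real.sqrt π := by
    rw [setIntegral_univ]
    have := integral_gaussian 1
    simpa using this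
  -- integrability facts
  have m0 : Measurable (fun x : ℝ => x^2) := measurable_id.pow_const 2
  have hmeas1 : Measurable (fun x : ℝ => Real.exp (-(x^2 + β^2/x^2))) :=
    Real.measurable_exp.comp ((m0.add (measurable_const.div m0)).neg)
  have hmeas2 : Measurable (fun x : ℝ => (β/x^2) * Real.exp (-(x^2 + β^2/x^2))) :=
    (measurable_const.div m0).mul hmeas1
  have int1 : IntegrableOn (fun x : ℝ => Real.exp (-(x^2 + β^2/x^2))) (Ioi 0) := by
    apply Integrable.mono' ((integrable_exp_neg_mul_sq one_pos).integrableOn)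
      hmeas1.aestronglyMeasurable
    filter_upwards [ae_restrict_mem measurableSet_Ioi] with x hx
    rw [Real.norm_eq_abs, abs_of_pos (Real.exp_pos _)]
    apply Real.exp_le_exp.mpr
    have : 0 ≤ β^2/x^2 := by positivity
    nlinarith
  have int2 : IntegrableOn (fun x : ℝ => (β/x^2) * Real.exp (-(x^2 + β^2/x^2))) (Ioi 0) := by
    apply Integrable.mono' (((integrable_exp_neg_mul_sq one_pos).integrableOn).const_mul (1/β))
      hmeas2.aestronglyMeasurable
    filter_upwards [ae_restrict_mem measurableSet_Ioi] with x hx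
    have hx0 : (0:ℝ) < x := hx
    have hu : (β^2/x^2) * Real.exp (-(β^2/x^2)) ≤ 1 := by
      have h1 : (β^2/x^2) ≤ Real.exp (β^2/x^2) := by
        have := Real.add_one_le_exp (β^2/x^2); linarith
      calc (β^2/x^2) * Real.exp (-(β^2/x^2)) ≤ Real.exp (β^2/x^2) * Real.exp (-(β^2/x^2)) := by
            apply mul_le_mul_of_nonneg_right h1 (Real.exp_pos _).le
      _ = 1 := by rw [← Real.exp_add]; simp
    rw [Real.norm_eq_abs, abs_of_nonneg (by positivity)]
    have hsplit : Real.exp (-(x^2 + β^2/x^2)) = Real.exp (-(β^2/x^2)) * Real.exp (-1*x^2) := by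
      rw [← Real.exp_add]; ring_nf
    rw [hsplit]
    have : (β/x^2) * (Real.exp (-(β^2/x^2)) * Real.exp (-1*x^2))
        = ((β^2/x^2) * Real.exp (-(β^2/x^2))) * ((1/β) * Real.exp (-1*x^2)) := by
      field_simp
    rw [this]
    calc ((β^2/x^2) * Real.exp (-(β^2/x^2))) * ((1/β) * Real.exp (-1*x^2))
        ≤ 1 * ((1/β) * Real.exp (-1*x^2)) := by
          apply mul_le_mul_of_nonneg_right hu (by positivity)
    _ = (1/β) * Real.exp (-1*x^2) := by ring
  -- rewrite RHS integrand
  have rhs_eq : ∫ x in Ioi (0:ℝ), |1 + β/x^2| • Real.exp (-(x - β/x)^2)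
      = Real.exp (2*β) * ((∫ x in Ioi (0:ℝ), Real.exp (-(x^2 + β^2/x^2)))
        + ∫ x in Ioi (0:ℝ), (β/x^2) * Real.exp (-(x^2 + β^2/x^2))) := by
    rw [← integral_add int1 int2, ← integral_const_mul]
    apply setIntegral_congr_fun measurableSet_Ioi
    intro x hx
    have hx0 : (0:ℝ) < x := hx
    have habs : |1 + β/x^2| = 1 + β/x^2 := abs_of_pos (by positivity)
    have hsq : (x - β/x)^2 = (x^2 + β^2/x^2) - 2*β := by
      field_simp; ring
    simp only [smul_eq_mul, habs, hsq]
    rw [neg_sub', sub_neg_eq_add, Real.exp_add]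
    ring
  -- second substitution: y = β/x
  have himg2 : (fun x : ℝ => β/x) '' (Ioi 0) = Ioi 0 := by
    ext y
    simp only [mem_image, mem_Ioi]
    constructor
    · rintro ⟨x, hx, rfl⟩; positivity
    · intro hy; exact ⟨β/y, by positivity, by field_simp⟩
  have hder2 : ∀ x ∈ Ioi (0:ℝ), HasDerivWithinAt (fun x : ℝ => β/x)
      (-(β/x^2)) (Ioi 0) x := by
    intro x hx
    have hx0 : x ≠ 0 := (mem_Ioi.mp hx).ne'
    have h := (hasDerivAt_inv hx0).const_mul β
    have e : (fun x : ℝ => β/x) = (fun y => β * y⁻¹) := by funext y; simp [div_eq_mul_inv]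
    rw [e]; exact (h.congr_deriv (by ring)).hasDerivWithinAt
  have hinj2 : InjOn (fun x : ℝ => β/x) (Ioi 0) := by
    apply StrictAntiOn.injOn
    intro x hx y hy hxy
    exact div_lt_div_of_pos_left hβ hx hxy
  have key2 := integral_image_eq_integral_abs_deriv_smul measurableSet_Ioi hder2 hinj2
      (fun y => Real.exp (-(y^2 + β^2/y^2)))
  rw [himg2] at key2
  have key2' : ∫ x in Ioi (0:ℝ), (β/x^2) * Real.exp (-(x^2 + β^2/x^2))
      = ∫ x in Ioi (0:ℝ), Real.exp (-(x^2 + β^2/x^2)) := by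
    rw [key2]
    apply setIntegral_congr_fun measurableSet_Ioi
    intro x hx
    have hx0 : (0:ℝ) < x := hx
    have habs : |(-(β/x^2))| = β/x^2 := by
      rw [abs_neg]; exact abs_of_pos (by positivity)
    have harg : ((β/x)^2 + β^2/(β/x)^2) = x^2 + β^2/x^2 := by
      field_simp; ring
    simp only [smul_eq_mul, habs, harg]
  rw [lhs_eq, rhs_eq, key2'] at key
  have he : Real.exp (2*β) > 0 := Real.exp_pos _
  set I := ∫ x in Ioi (0:ℝ), Real.exp (-(x^2 + β^2/x^2)) with hIdef
  rw [Real.exp_neg]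
  field_simp
  ring_nf at key ⊢
  linarith
lemma meas_cpow (w : ℂ) : Measurable (fun t : ℝ => (t:ℂ)^w) := by measurability

lemma cpow_pos_real {x : ℝ} (hx : 0 < x) (w : ℂ) :
    (x:ℂ)^w = Complex.exp (w * (Real.log x : ℂ)) := by
  rw [Complex.cpow_def_of_ne_zero (Complex.ofReal_ne_zero.mpr hx.ne'),
    Complex.ofReal_log hx.le, mul_comm]

lemma integrableOn_cpow_mul_exp_neg_mul {w : ℂ} (hw : 0 < w.re) {r : ℝ} (hr : 0 < r) :
    IntegrableOn (fun t : ℝ => (t:ℂ)^(w-1) * (Real.exp (-(r*t)) : ℂ)) (Ioi 0) := by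
  have hre : (-1:ℝ) < w.re - 1 := by linarith
  have hbase : IntegrableOn (fun t : ℝ => t ^ (w.re - 1) * Real.exp (-r * t^(1:ℝ))) (Ioi 0) :=
    integrableOn_rpow_mul_exp_neg_mul_rpow hre one_pos hr
  apply Integrable.mono' hbase
  · apply Measurable.aestronglyMeasurable
    exact (meas_cpow (w-1)).mul
      (Complex.measurable_ofReal.comp (Real.measurable_exp.comp (measurable_const.mul measurable_id).neg))
  · filter_upwards [ae_restrict_mem measurableSet_Ioi] with t ht
    have ht0 : (0:ℝ) < t := ht
    rw [norm_mul, Complex.norm_cpow_eq_rpow_re_of_pos ht0, Complex.norm_real, Real.norm_eq_abs,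
      abs_of_pos (Real.exp_pos _), Complex.sub_re, Complex.one_re,
      Real.rpow_one, neg_mul]

/-- Gamma representation: `X^(-s/2) = Γ(s/2)⁻¹ ∫ λ^(s/2-1) e^(-Xλ)`. -/
lemma cpow_neg_eq_gamma_inv_integral {w : ℂ} (hw : 0 < w.re) {X : ℝ} (hX : 0 < X) :
    ((X:ℝ):ℂ)^(-w) = (Complex.Gamma w)⁻¹ *
      ∫ t in Ioi (0:ℝ), (t:ℂ)^(w-1) * (Real.exp (-(X*t)) : ℂ) := by
  have key := Complex.integral_cpow_mul_exp_neg_mul_Ioi hw hX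
  have hintg : (∫ t in Ioi (0:ℝ), (t:ℂ)^(w-1) * (Real.exp (-(X*t)) : ℂ))
      = (1/(X:ℂ))^w * Complex.Gamma w := by
    rw [← key]
    apply setIntegral_congr_fun measurableSet_Ioi
    intro t ht
    simp only
    congr 1
    rw [Complex.ofReal_exp]
    norm_cast
  rw [hintg, one_div, Complex.inv_cpow _ _ (by
      rw [Complex.arg_ofReal_of_nonneg hX.le]; exact Real.pi_ne_zero.symm),
    ← Complex.cpow_neg, mul_comm ((X:ℂ)^(-w)) (Complex.Gamma w), ← mul_assoc,
    inv_mul_cancel₀ (Complex.Gamma_ne_zero_of_re_pos hw), one_mul]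

/-- The final lambda-integral. -/
lemma lam_integral {s : ℂ} (hs : 0 < s.re) {k : ℝ} (hk : 0 < k) :
    ∫ t in Ioi (0:ℝ), (t:ℂ)^(s/2-1) * (Real.exp (-(2*k*Real.sqrt t)) : ℂ)
      = 2 * (1/((2*k:ℝ):ℂ))^s * Complex.Gamma s := by
  have h2 : (2:ℝ) ≠ 0 := two_ne_zero
  have hsub := integral_comp_rpow_Ioi
    (fun t : ℝ => (t:ℂ)^(s/2-1) * (Real.exp (-(2*k*Real.sqrt t)) : ℂ)) h2
  rw [← hsub]
  have hcong : ∀ x ∈ Ioi (0:ℝ),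
      (|(2:ℝ)| * x^((2:ℝ)-1)) • (((x^(2:ℝ):ℝ):ℂ)^(s/2-1) * (Real.exp (-(2*k*Real.sqrt (x^(2:ℝ)))) : ℂ))
      = 2 * ((x:ℂ)^(s-1) * (Real.exp (-(2*k*x)) : ℂ)) := by
    intro x hx
    have hx0 : (0:ℝ) < x := hx
    have hxsq : x^(2:ℝ) = x^2 := by
      rw [← Real.rpow_natCast x 2]; norm_num
    have hsqrt : Real.sqrt (x^(2:ℝ)) = x := by rw [hxsq, Real.sqrt_sq hx0.le]
    have hx2pos : (0:ℝ) < x^2 := by positivity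
    have hcp : ((x^(2:ℝ):ℝ):ℂ)^(s/2-1) = (x:ℂ)^(s-2) := by
      rw [hxsq, cpow_pos_real hx2pos, cpow_pos_real hx0]
      congr 1
      rw [show ((x:ℝ)^2 = x*x) by ring, Real.log_mul hx0.ne' hx0.ne']
      push_cast
      ring
    rw [hsqrt, hcp]
    have hxc : (x:ℂ)^(s-2) * (x:ℂ) = (x:ℂ)^(s-1) := by
      nth_rewrite 2 [← Complex.cpow_one (x:ℂ)]
      rw [← Complex.cpow_add _ _ (Complex.ofReal_ne_zero.mpr hx0.ne')]
      ring_nf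
    have habs : |(2:ℝ)| = 2 := abs_of_pos two_pos
    rw [habs]
    have : x^((2:ℝ)-1) = x := by norm_num
    rw [this, Complex.real_smul]
    push_cast
    rw [← hxc]
    ring
  rw [setIntegral_congr_fun measurableSet_Ioi hcong, MeasureTheory.integral_const_mul]
  have h2k : (0:ℝ) < 2*k := by linarith
  have := Complex.integral_cpow_mul_exp_neg_mul_Ioi hs h2k
  rw [mul_assoc, ← this]
  congr 1
  apply setIntegral_congr_fun measurableSet_Ioi
  intro t ht
  simp only
  congr 1
  rw [Complex.ofReal_exp]
  norm_cast

lemma re_half_sub_one (s : ℂ) : (s/2 - 1).re = s.re/2 - 1 := by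
  rw [Complex.sub_re, Complex.one_re]
  congr 1
  rw [show (s/2) = s * (1/2) by ring, Complex.mul_re]
  norm_num
  ring

lemma fubini_key {s : ℂ} (hs : 0 < s.re) {b : ℝ} (hb : 0 < b) {A : ℝ} (hA : 0 ≤ A)
    (g : ℝ → ℝ) (hg_meas : Measurable g) (hg0 : ∀ t, 0 ≤ g t) (hg1 : ∀ t, g t ≤ 1) :
    Integrable (Function.uncurry fun (x t : ℝ) =>
      (t:ℂ)^(s/2-1) * (g t : ℂ) * (Real.exp (-((A + b/x^2) * t)) : ℂ) * (Real.exp (-x^2) : ℂ))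
      ((volume.restrict (Ioi 0)).prod (volume.restrict (Ioi 0))) := by
  have hre := re_half_sub_one s
  have hre' : (-1:ℝ) < s.re/2 - 1 := by linarith
  have hmx : Measurable (fun p : ℝ × ℝ => (A + b/p.1^2) * p.2) :=
    ((measurable_const.add (measurable_const.div ((measurable_fst.pow_const 2)))).mul measurable_snd)
  have hmeas : Measurable (Function.uncurry fun (x t : ℝ) =>
      (t:ℂ)^(s/2-1) * (g t : ℂ) * (Real.exp (-((A + b/x^2) * t)) : ℂ) * (Real.exp (-x^2) : ℂ)) := by
    apply Measurable.mul
    apply Measurable.mul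
    apply Measurable.mul
    · exact (meas_cpow (s/2-1)).comp measurable_snd
    · exact Complex.measurable_ofReal.comp (hg_meas.comp measurable_snd)
    · exact Complex.measurable_ofReal.comp (Real.measurable_exp.comp hmx.neg)
    · exact Complex.measurable_ofReal.comp
        (Real.measurable_exp.comp (measurable_fst.pow_const 2).neg)
  -- norm identity
  have hnorm : ∀ x ∈ Ioi (0:ℝ), ∀ t ∈ Ioi (0:ℝ),
      ‖(t:ℂ)^(s/2-1) * (g t : ℂ) * (Real.exp (-((A + b/x^2) * t)) : ℂ) * (Real.exp (-x^2) : ℂ)‖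
      = t^(s.re/2-1) * g t * Real.exp (-((A + b/x^2) * t)) * Real.exp (-x^2) := by
    intro x hx t ht
    rw [norm_mul, norm_mul, norm_mul, Complex.norm_cpow_eq_rpow_re_of_pos ht,
      Complex.norm_real, Complex.norm_real, Complex.norm_real, Real.norm_eq_abs, Real.norm_eq_abs, Real.norm_eq_abs,
      abs_of_nonneg (hg0 t), abs_of_pos (Real.exp_pos _), abs_of_pos (Real.exp_pos _), hre]
  rw [integrable_prod_iff hmeas.aestronglyMeasurable]
  constructor
  · filter_upwards [ae_restrict_mem measurableSet_Ioi] with x hx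
    simp only [Function.uncurry_apply_pair]
    have hx0 : (0:ℝ) < x := hx
    have hbx : (0:ℝ) < b/x^2 := by positivity
    have base : IntegrableOn (fun t : ℝ => t ^ (s.re/2 - 1) * Real.exp (-(b/x^2) * t^(1:ℝ)))
        (Ioi 0) := integrableOn_rpow_mul_exp_neg_mul_rpow hre' one_pos hbx
    apply Integrable.mono' base
    · apply Measurable.aestronglyMeasurable
      apply Measurable.mul
      apply Measurable.mul
      apply Measurable.mul
      · exact meas_cpow (s/2-1)
      · exact Complex.measurable_ofReal.comp hg_meas
      · exact Complex.measurable_ofReal.comp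
          (Real.measurable_exp.comp ((measurable_const.mul measurable_id).neg))
      · exact measurable_const
    · filter_upwards [ae_restrict_mem measurableSet_Ioi] with t ht
      rw [hnorm x hx t ht]
      have ht0 : (0:ℝ) < t := ht
      have h1 : Real.exp (-((A + b/x^2) * t)) ≤ Real.exp (-(b/x^2 * t)) := by
        apply Real.exp_le_exp.mpr
        nlinarith
      have h2 : Real.exp (-x^2) ≤ 1 := Real.exp_le_one_iff.mpr (by nlinarith)
      rw [Real.rpow_one]
      calc t^(s.re/2-1) * g t * Real.exp (-((A + b/x^2) * t)) * Real.exp (-x^2)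
          ≤ t^(s.re/2-1) * 1 * Real.exp (-(b/x^2 * t)) * 1 := by
            apply mul_le_mul (by
              apply mul_le_mul (by
                apply mul_le_mul le_rfl (hg1 t) (hg0 t) (by positivity)) h1
                (Real.exp_pos _).le (by positivity)) h2 (Real.exp_pos _).le (by positivity)
      _ = t^(s.re/2-1) * Real.exp (-(b/x^2) * t) := by ring_nf
  · apply Integrable.mono'
      (g := fun x : ℝ => (Real.Gamma (s.re/2) / b^(s.re/2)) * (x^(s.re) * Real.exp (-1*x^2)))
    · exact ((integrableOn_rpow_mul_exp_neg_mul_sq one_pos (by linarith)).const_mul _)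
    · exact (hmeas.aestronglyMeasurable.norm).integral_prod_right'
    · filter_upwards [ae_restrict_mem measurableSet_Ioi] with x hx
      simp only [Function.uncurry_apply_pair]
      have hx0 : (0:ℝ) < x := hx
      have hbx : (0:ℝ) < b/x^2 := by positivity
      have hdomint := integral_rpow_mul_exp_neg_mul_Ioi (by linarith : (0:ℝ) < s.re/2) hbx
      have hbound : ∫ t in Ioi (0:ℝ),
          ‖(t:ℂ)^(s/2-1) * (g t : ℂ) * (Real.exp (-((A + b/x^2) * t)) : ℂ) * (Real.exp (-x^2) : ℂ)‖
          ≤ Real.exp (-x^2) * ((1/(b/x^2))^(s.re/2) * Real.Gamma (s.re/2)) := by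
        rw [← hdomint, ← integral_const_mul]
        apply integral_mono_of_nonneg
        · filter_upwards with t using norm_nonneg _
        · apply Integrable.const_mul
          have := integrableOn_rpow_mul_exp_neg_mul_rpow hre' one_pos hbx
          apply this.congr_fun (fun t ht => by rw [Real.rpow_one, neg_mul]) measurableSet_Ioi
        · filter_upwards [ae_restrict_mem measurableSet_Ioi] with t ht
          rw [hnorm x hx t ht]
          have ht0 : (0:ℝ) < t := ht
          have h1 : Real.exp (-((A + b/x^2) * t)) ≤ Real.exp (-(b/x^2 * t)) := by
            apply Real.exp_le_exp.mpr; nlinarith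
          calc t^(s.re/2-1) * g t * Real.exp (-((A + b/x^2) * t)) * Real.exp (-x^2)
              ≤ t^(s.re/2-1) * 1 * Real.exp (-(b/x^2 * t)) * Real.exp (-x^2) := by
                apply mul_le_mul (by
                  apply mul_le_mul (by
                    apply mul_le_mul le_rfl (hg1 t) (hg0 t) (by positivity)) h1
                    (Real.exp_pos _).le (by positivity)) le_rfl (Real.exp_pos _).le (by positivity)
          _ = Real.exp (-x^2) * (t^(s.re/2-1) * Real.exp (-(b/x^2 * t))) := by ring
      have hval : (1/(b/x^2))^(s.re/2) = x^(s.re) / b^(s.re/2) := by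
        rw [show (1/(b/x^2)) = x^2/b by field_simp, Real.div_rpow (by positivity) hb.le]
        congr 1
        rw [← Real.rpow_natCast x 2, ← Real.rpow_mul hx0.le]
        norm_num
        congr 1
        ring
      rw [Real.norm_eq_abs, abs_of_nonneg (integral_nonneg (fun t => norm_nonneg _))]
      refine hbound.trans ?_
      rw [hval]
      have hexp : Real.exp (-1*x^2) = Real.exp (-x^2) := by norm_num
      rw [hexp]
      apply le_of_eq
      ring

lemma integrand_rewrite {s : ℂ} {nn c u v : ℝ} (hn : 0 < nn) (hc : 0 < c)
    (hu : 0 < u) (hv : 0 < v) :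
    ((u*v : ℝ) : ℂ)^s * (Real.exp (-(u^2+v^2)) : ℂ) / ((nn^2*u^2 + c^2*v^2 : ℝ) : ℂ)^(s/2)
      = ((nn^2/v^2 + c^2/u^2 : ℝ):ℂ)^(-(s/2)) * (Real.exp (-(u^2+v^2)) : ℂ) := by
  have hD : (0:ℝ) < nn^2*u^2 + c^2*v^2 := by positivity
  have hP : (0:ℝ) < u*v := by positivity
  have hX : (0:ℝ) < nn^2/v^2 + c^2/u^2 := by positivity
  have hlog : Real.log (nn^2/v^2 + c^2/u^2)
      = Real.log (nn^2*u^2 + c^2*v^2) - 2 * Real.log (u*v) := by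
    rw [show nn^2/v^2 + c^2/u^2 = (nn^2*u^2 + c^2*v^2) / (u*v)^2 by
        rw [eq_div_iff (by positivity)]; field_simp; try ring
        try exact Or.inl trivial,
      Real.log_div hD.ne' (by positivity), Real.log_pow]
    push_cast
    ring
  rw [cpow_pos_real hP, cpow_pos_real hD, cpow_pos_real hX, div_eq_mul_inv, ← Complex.exp_neg,
    mul_right_comm, ← Complex.exp_add]
  congr 2
  rw [hlog]
  push_cast
  ring

lemma glasser' {β : ℝ} (hβ : 0 < β) {b t : ℝ} (hb : 0 < b) (ht : 0 < t)
    (hβval : β = b * Real.sqrt t) :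
    ∫ x in Ioi (0:ℝ), Real.exp (-(x^2 + (b^2*t)/x^2)) = Real.sqrt π / 2 * Real.exp (-(2*β)) := by
  have h2 : b^2*t = β^2 := by
    rw [hβval, mul_pow, Real.sq_sqrt ht.le]
  rw [h2]
  exact glasser hβ

lemma inner_integral {s : ℂ} (hs : 0 < s.re) {nn c : ℝ} (hn : 0 < nn) (hc : 0 < c)
    {v : ℝ} (hv : 0 < v) :
    (∫ u in Ioi (0:ℝ), ((u*v : ℝ) : ℂ)^s * (Real.exp (-(u^2+v^2)) : ℂ) /
        ((nn^2*u^2 + c^2*v^2 : ℝ) : ℂ)^(s/2))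
    = (Complex.Gamma (s/2))⁻¹ * ((Real.sqrt π / 2 : ℝ) : ℂ) *
      ∫ t in Ioi (0:ℝ), (t:ℂ)^(s/2-1) * ((Real.exp (-(2*c*Real.sqrt t)) : ℝ) : ℂ)
        * ((Real.exp (-((0 + nn^2/v^2) * t)) : ℝ) : ℂ) * ((Real.exp (-v^2) : ℝ) : ℂ) := by
  have hw : 0 < (s/2).re := by
    have := re_half_sub_one s
    have h1 : (s/2).re = s.re/2 := by
      have : (s/2 - 1).re = (s/2).re - 1 := by rw [Complex.sub_re, Complex.one_re]
      linarith [re_half_sub_one s]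
    rw [h1]; linarith
  have hA : (0:ℝ) ≤ nn^2/v^2 := by positivity
  have hb : (0:ℝ) < c^2 := by positivity
  -- step 1: rewrite the integrand
  have step1 : (∫ u in Ioi (0:ℝ), ((u*v : ℝ) : ℂ)^s * (Real.exp (-(u^2+v^2)) : ℂ) /
        ((nn^2*u^2 + c^2*v^2 : ℝ) : ℂ)^(s/2))
      = (Complex.Gamma (s/2))⁻¹ * ((Real.exp (-v^2) : ℝ) : ℂ) *
        ∫ u in Ioi (0:ℝ), ∫ t in Ioi (0:ℝ),
          (t:ℂ)^(s/2-1) * ((1:ℝ) : ℂ) * ((Real.exp (-((nn^2/v^2 + c^2/u^2) * t)) : ℝ) : ℂ)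
            * ((Real.exp (-u^2) : ℝ) : ℂ) := by
    rw [mul_assoc, ← MeasureTheory.integral_const_mul, ← MeasureTheory.integral_const_mul]
    apply setIntegral_congr_fun measurableSet_Ioi
    intro u hu
    have hu0 : (0:ℝ) < u := hu
    have hX : (0:ℝ) < nn^2/v^2 + c^2/u^2 := by positivity
    simp only
    rw [integrand_rewrite hn hc hu0 hv, cpow_neg_eq_gamma_inv_integral hw hX]
    rw [mul_assoc]
    congr 1
    rw [← MeasureTheory.integral_const_mul, ← integral_mul_const]
    apply setIntegral_congr_fun measurableSet_Ioi
    intro t ht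
    simp only
    have : Real.exp (-(u^2+v^2)) = Real.exp (-u^2) * Real.exp (-v^2) := by
      rw [← Real.exp_add]; ring_nf
    rw [this]
    push_cast
    ring
  rw [step1]
  -- step 2: swap the integrals
  have hswap := MeasureTheory.integral_integral_swap
    (f := fun (u t : ℝ) => (t:ℂ)^(s/2-1) * (((fun _ : ℝ => (1:ℝ)) t : ℝ) : ℂ)
      * ((Real.exp (-((nn^2/v^2 + c^2/u^2) * t)) : ℝ) : ℂ) * ((Real.exp (-u^2) : ℝ) : ℂ))
    (by
      have := fubini_key hs hb hA (fun _ : ℝ => (1:ℝ)) measurable_const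
        (fun _ => zero_le_one) (fun _ => le_rfl)
      exact this.congr (by filter_upwards with p using rfl))
  simp only at hswap
  rw [hswap]
  -- step 3: compute the inner u-integral via glasser
  have step3 : ∀ t ∈ Ioi (0:ℝ),
      (∫ u in Ioi (0:ℝ), (t:ℂ)^(s/2-1) * ((1:ℝ) : ℂ)
        * ((Real.exp (-((nn^2/v^2 + c^2/u^2) * t)) : ℝ) : ℂ) * ((Real.exp (-u^2) : ℝ) : ℂ))
      = (t:ℂ)^(s/2-1) * ((Real.exp (-((nn^2/v^2) * t)) : ℝ) : ℂ)
          * ((Real.sqrt π / 2 * Real.exp (-(2*c*Real.sqrt t)) : ℝ) : ℂ) := by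
    intro t ht
    have ht0 : (0:ℝ) < t := ht
    have hβ : (0:ℝ) < c * Real.sqrt t := by positivity
    have hgl := glasser' hβ hc ht0 rfl
    have hcong : ∀ u ∈ Ioi (0:ℝ),
        (t:ℂ)^(s/2-1) * ((1:ℝ) : ℂ)
          * ((Real.exp (-((nn^2/v^2 + c^2/u^2) * t)) : ℝ) : ℂ) * ((Real.exp (-u^2) : ℝ) : ℂ)
        = ((t:ℂ)^(s/2-1) * ((Real.exp (-((nn^2/v^2) * t)) : ℝ) : ℂ))
            * ((Real.exp (-(u^2 + (c^2*t)/u^2)) : ℝ) : ℂ) := by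
      intro u hu
      have hu0 : (0:ℝ) < u := hu
      have hexp : Real.exp (-((nn^2/v^2 + c^2/u^2) * t)) * Real.exp (-u^2)
          = Real.exp (-((nn^2/v^2) * t)) * Real.exp (-(u^2 + (c^2*t)/u^2)) := by
        rw [← Real.exp_add, ← Real.exp_add]
        congr 1
        field_simp
        ring
      rw [Complex.ofReal_one, mul_one, mul_assoc, ← Complex.ofReal_mul, hexp,
        Complex.ofReal_mul, ← mul_assoc]
    have hofreal : (∫ a in Ioi (0:ℝ), ((Real.exp (-(a^2 + c^2*t/a^2)) : ℝ) : ℂ))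
        = ((Real.sqrt π/2 * Real.exp (-(2*(c*Real.sqrt t))) : ℝ) : ℂ) := by
      rw [← hgl]; exact integral_ofReal
    rw [setIntegral_congr_fun measurableSet_Ioi hcong, MeasureTheory.integral_const_mul,
      hofreal]
    push_cast
    ring
  rw [setIntegral_congr_fun measurableSet_Ioi step3]
  -- step 4: rearrange into the target form
  rw [mul_assoc, mul_assoc]
  congr 1
  have e1 : (∫ t in Ioi (0:ℝ), (t:ℂ)^(s/2-1) * ((Real.exp (-(nn^2/v^2 * t)) : ℝ) : ℂ)
        * ((Real.sqrt π/2 * Real.exp (-(2*c*Real.sqrt t)) : ℝ) : ℂ))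
      = ((Real.sqrt π/2 : ℝ) : ℂ) * ∫ t in Ioi (0:ℝ), (t:ℂ)^(s/2-1)
        * ((Real.exp (-(nn^2/v^2 * t)) : ℝ) : ℂ) * ((Real.exp (-(2*c*Real.sqrt t)) : ℝ) : ℂ) := by
    rw [← MeasureTheory.integral_const_mul]
    apply setIntegral_congr_fun measurableSet_Ioi
    intro t ht
    push_cast
    ring
  have e2 : (∫ t in Ioi (0:ℝ), (t:ℂ)^(s/2-1) * ((Real.exp (-(2*c*Real.sqrt t)) : ℝ) : ℂ)
        * ((Real.exp (-((0 + nn^2/v^2) * t)) : ℝ) : ℂ) * ((Real.exp (-v^2) : ℝ) : ℂ))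
      = (∫ t in Ioi (0:ℝ), (t:ℂ)^(s/2-1)
        * ((Real.exp (-(nn^2/v^2 * t)) : ℝ) : ℂ) * ((Real.exp (-(2*c*Real.sqrt t)) : ℝ) : ℂ))
        * ((Real.exp (-v^2) : ℝ) : ℂ) := by
    rw [← integral_mul_const]
    apply setIntegral_congr_fun measurableSet_Ioi
    intro t ht
    rw [zero_add]
    push_cast
    ring
  rw [e1, e2]
  ring

lemma final_algebra (s : ℂ) (hs : 0 < s.re) (k : ℝ) (hk : 0 < k) :
    4 / ((Real.sqrt π : ℂ) * Complex.Gamma ((1 + s) / 2)) *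
      ((Complex.Gamma (s / 2))⁻¹ * ((Real.sqrt π / 2 : ℝ) : ℂ) *
        (((Real.sqrt π / 2 : ℝ) : ℂ) * (2 * (1 / ((2 * k : ℝ) : ℂ)) ^ s * Complex.Gamma s)))
    = ((k : ℝ) : ℂ) ^ (-s) := by
  have hre2 : 0 < (s/2).re := by
    rw [show s/2 = s * (1/2) by ring, Complex.mul_re]
    norm_num
    linarith
  have hre1 : 0 < ((1+s)/2).re := by
    rw [show (1+s)/2 = (1+s) * (1/2) by ring, Complex.mul_re]
    simp [Complex.add_re, Complex.add_im]
    linarith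
  have hG1 : Complex.Gamma ((1+s)/2) ≠ 0 := Complex.Gamma_ne_zero_of_re_pos hre1
  have hG2 : Complex.Gamma (s/2) ≠ 0 := Complex.Gamma_ne_zero_of_re_pos hre2
  have hP0 : (0:ℝ) < Real.sqrt π := Real.sqrt_pos.mpr Real.pi_pos
  have hP : ((Real.sqrt π : ℝ) : ℂ) ≠ 0 := Complex.ofReal_ne_zero.mpr hP0.ne'
  have h2sne : (2:ℂ)^s ≠ 0 := by
    rw [Complex.cpow_def_of_ne_zero two_ne_zero]; exact Complex.exp_ne_zero _
  have hkC : ((k:ℝ):ℂ) ≠ 0 := Complex.ofReal_ne_zero.mpr hk.ne'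
  have hksne : ((k:ℝ):ℂ)^s ≠ 0 := by
    rw [Complex.cpow_def_of_ne_zero hkC]; exact Complex.exp_ne_zero _
  have hdup := Complex.Gamma_mul_Gamma_add_half (s/2)
  rw [show (2:ℂ) * (s/2) = s by ring, show s/2 + 1/2 = (1+s)/2 by ring] at hdup
  have h2s : (2:ℂ)^((1:ℂ)-s) = 2 * ((2:ℂ)^s)⁻¹ := by
    rw [Complex.cpow_sub _ _ two_ne_zero, Complex.cpow_one, div_eq_mul_inv]
  rw [h2s] at hdup
  have h2k : (1 / ((2 * k : ℝ) : ℂ)) ^ s = ((2:ℂ)^s)⁻¹ * (((k:ℝ):ℂ)^s)⁻¹ := by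
    rw [one_div, Complex.inv_cpow _ _ (by
      rw [Complex.arg_ofReal_of_nonneg (by linarith)]; exact Real.pi_ne_zero.symm)]
    rw [show ((2 * k : ℝ) : ℂ) = ((2:ℝ):ℂ) * ((k:ℝ):ℂ) by push_cast; ring,
      Complex.mul_cpow_ofReal_nonneg (by norm_num) hk.le]
    rw [mul_inv]
    norm_num
  have hkneg : ((k:ℝ):ℂ)^(-s) = (((k:ℝ):ℂ)^s)⁻¹ := Complex.cpow_neg _ _
  have hPP : ((Real.sqrt π / 2 : ℝ) : ℂ) * ((Real.sqrt π / 2 : ℝ) : ℂ) = ((π:ℝ):ℂ) / 4 := by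
    rw [← Complex.ofReal_mul, show (Real.sqrt π/2) * (Real.sqrt π/2) = π/4 by
      rw [div_mul_div_comm, Real.mul_self_sqrt Real.pi_pos.le]; norm_num]
    push_cast
    ring
  have hpi : ((π:ℝ):ℂ) = ((Real.sqrt π : ℝ):ℂ) * ((Real.sqrt π : ℝ):ℂ) := by
    rw [← Complex.ofReal_mul, Real.mul_self_sqrt Real.pi_pos.le]
  have hinv : ((2:ℂ)^s)⁻¹ * (2:ℂ)^s = 1 := inv_mul_cancel₀ h2sne
  have hGs : Complex.Gamma s
      = Complex.Gamma (s/2) * Complex.Gamma ((1+s)/2) * (2:ℂ)^s / (2 * ((Real.sqrt π : ℝ):ℂ)) := by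
    rw [eq_div_iff (by simp [hP])]
    linear_combination ((2:ℂ)^s) * hdup.symm
      - (2*Complex.Gamma s*((Real.sqrt π : ℝ):ℂ)) * hinv
  rw [hkneg, h2k, hGs]
  push_cast
  set P := ((Real.sqrt π : ℝ):ℂ) with hPdef
  set G1 := Complex.Gamma ((1+s)/2) with hG1def
  set G2 := Complex.Gamma (s/2) with hG2def
  set D := (2:ℂ)^s with hDdef
  set E := ((k:ℝ):ℂ)^s with hEdef
  field_simp
  norm_num

theorem double_integral_a_gt_one (s : ℂ) (hs : 0 < s.re) (n a : ℝ) (hn : 0 < n)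
    (ha : 1 < a) :
    (4 / ((Real.sqrt π : ℂ) * Complex.Gamma ((1+s)/2))) *
      ∫ v in Ioi (0:ℝ), ∫ u in Ioi (0:ℝ),
        ((u*v : ℝ) : ℂ) ^ s * (Real.exp (-(u^2+v^2)) : ℂ) /
          ((n^2*u^2 + (a-1)^2*v^2 : ℝ) : ℂ) ^ (s/2)
      = ((n + a - 1 : ℝ) : ℂ) ^ (-s) := by
  have hc : 0 < a - 1 := by linarith
  have hk : 0 < n + (a-1) := by linarith
  have hb : (0:ℝ) < n^2 := by positivity
  have hA0 : (0:ℝ) ≤ 0 := le_rfl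
  -- inner integral
  have hinner : ∀ v ∈ Ioi (0:ℝ),
      (∫ u in Ioi (0:ℝ), ((u*v : ℝ) : ℂ) ^ s * (Real.exp (-(u^2+v^2)) : ℂ) /
          ((n^2*u^2 + (a-1)^2*v^2 : ℝ) : ℂ) ^ (s/2))
      = (Complex.Gamma (s/2))⁻¹ * ((Real.sqrt π / 2 : ℝ) : ℂ) *
        ∫ t in Ioi (0:ℝ), (t:ℂ)^(s/2-1) * ((Real.exp (-(2*(a-1)*Real.sqrt t)) : ℝ) : ℂ)
          * ((Real.exp (-((0 + n^2/v^2) * t)) : ℝ) : ℂ) * ((Real.exp (-v^2) : ℝ) : ℂ) :=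
    fun v hv => inner_integral hs hn hc hv
  rw [setIntegral_congr_fun measurableSet_Ioi hinner, MeasureTheory.integral_const_mul]
  -- swap the v and t integrals
  have hgmeas : Measurable (fun t : ℝ => Real.exp (-(2*(a-1)*Real.sqrt t))) :=
    Real.measurable_exp.comp ((measurable_const.mul Real.continuous_sqrt.measurable).neg)
  have hg0 : ∀ t : ℝ, 0 ≤ Real.exp (-(2*(a-1)*Real.sqrt t)) := fun t => (Real.exp_pos _).le
  have hg1 : ∀ t : ℝ, Real.exp (-(2*(a-1)*Real.sqrt t)) ≤ 1 := by
    intro t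
    apply Real.exp_le_one_iff.mpr
    have : 0 ≤ Real.sqrt t := Real.sqrt_nonneg t
    nlinarith
  have hswap := MeasureTheory.integral_integral_swap
    (f := fun (v t : ℝ) => (t:ℂ)^(s/2-1) * ((Real.exp (-(2*(a-1)*Real.sqrt t)) : ℝ) : ℂ)
      * ((Real.exp (-((0 + n^2/v^2) * t)) : ℝ) : ℂ) * ((Real.exp (-v^2) : ℝ) : ℂ))
    (by
      have := fubini_key hs hb hA0 (fun t : ℝ => Real.exp (-(2*(a-1)*Real.sqrt t)))
        hgmeas hg0 hg1
      exact this.congr (by filter_upwards with p using rfl))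
  rw [hswap]
  -- compute the inner v-integral via glasser
  have hstepv : ∀ t ∈ Ioi (0:ℝ),
      (∫ v in Ioi (0:ℝ), (t:ℂ)^(s/2-1) * ((Real.exp (-(2*(a-1)*Real.sqrt t)) : ℝ) : ℂ)
        * ((Real.exp (-((0 + n^2/v^2) * t)) : ℝ) : ℂ) * ((Real.exp (-v^2) : ℝ) : ℂ))
      = ((Real.sqrt π / 2 : ℝ) : ℂ) *
          ((t:ℂ)^(s/2-1) * ((Real.exp (-(2*(n+(a-1))*Real.sqrt t)) : ℝ) : ℂ)) := by
    intro t ht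
    have ht0 : (0:ℝ) < t := ht
    have hβ : (0:ℝ) < n * Real.sqrt t := by positivity
    have hgl := glasser' hβ hn ht0 rfl
    have hcong : ∀ v ∈ Ioi (0:ℝ),
        (t:ℂ)^(s/2-1) * ((Real.exp (-(2*(a-1)*Real.sqrt t)) : ℝ) : ℂ)
          * ((Real.exp (-((0 + n^2/v^2) * t)) : ℝ) : ℂ) * ((Real.exp (-v^2) : ℝ) : ℂ)
        = ((t:ℂ)^(s/2-1) * ((Real.exp (-(2*(a-1)*Real.sqrt t)) : ℝ) : ℂ))
            * ((Real.exp (-(v^2 + (n^2*t)/v^2)) : ℝ) : ℂ) := by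
      intro v hv
      have hv0 : (0:ℝ) < v := hv
      have hexp : Real.exp (-((0 + n^2/v^2) * t)) * Real.exp (-v^2)
          = Real.exp (-(v^2 + (n^2*t)/v^2)) := by
        rw [← Real.exp_add]
        congr 1
        field_simp
        try ring
      rw [mul_assoc, ← Complex.ofReal_mul, hexp]
    have hofreal : (∫ x in Ioi (0:ℝ), ((Real.exp (-(x^2 + n^2*t/x^2)) : ℝ) : ℂ))
        = ((Real.sqrt π/2 * Real.exp (-(2*(n*Real.sqrt t))) : ℝ) : ℂ) := by
      rw [← hgl]; exact integral_ofReal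
    have hcomb : Real.exp (-(2*(a-1)*Real.sqrt t)) * Real.exp (-(2*(n*Real.sqrt t)))
        = Real.exp (-(2*(n+(a-1))*Real.sqrt t)) := by
      rw [← Real.exp_add]; ring_nf
    rw [setIntegral_congr_fun measurableSet_Ioi hcong, MeasureTheory.integral_const_mul, hofreal,
      ← hcomb]
    push_cast
    ring
  rw [setIntegral_congr_fun measurableSet_Ioi hstepv, MeasureTheory.integral_const_mul]
  rw [lam_integral hs hk,
    show (n + a - 1 : ℝ) = n + (a - 1) by ring]
  exact final_algebra s hs (n + (a-1)) hk
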